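/- Let B ∈ ℝ² be an anchor, P_f ∈ ℝ² a final point, and P₀, P₁ ∈ ℝ² measurement points with P₀ ≠ B and P₁ ≠ B. Then the vectors γ(B, P₀, P_f) and γ(B, P₁, P_f) in ℝ³ are linearly dependent over ℝ if and only if B, P₀, P₁ are collinear. -/

import Mathlib

/-- The rank-one information vector of a single range measurement from anchor `B`
taken at point `P`, for final point `Pf` (plane identified with Euclidean `ℝ²`). -/
noncomputable def gamma (B P Pf : EuclideanSpace ℝ (Fin 2)) : Fin 3 → ℝ :=
  ![(P 0 - B 0) / ‖P - B‖,
    (P 1 - B 1) / ‖P - B‖,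
    ((Pf 0 - P 0) * (B 1 - P 1) - (Pf 1 - P 1) * (B 0 - P 0)) / ‖P - B‖]

/-- Two measurements from a single anchor: the two information vectors are linearly
dependent iff the anchor and the two measurement points are collinear. -/
theorem two_measurements_single_anchor_dependent_iff_collinear
    (B Pf P0 P1 : EuclideanSpace ℝ (Fin 2)) (h0 : P0 ≠ B) (h1 : P1 ≠ B) :
    ¬ LinearIndependent ℝ ![gamma B P0 Pf, gamma B P1 Pf] ↔
      Collinear ℝ ({B, P0, P1} : Set (EuclideanSpace ℝ (Fin 2))) := by
  have r0 : ‖P0 - B‖ ≠ 0 := by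
    simpa [sub_eq_zero] using h0
  have r1 : ‖P1 - B‖ ≠ 0 := by
    simpa [sub_eq_zero] using h1
  rw [LinearIndependent.pair_iff]
  constructor
  · intro h
    push_neg at h
    obtain ⟨s, t, hst, hne⟩ := h
    have e0 : s * ((P0 0 - B 0) / ‖P0 - B‖) + t * ((P1 0 - B 0) / ‖P1 - B‖) = 0 := by
      have := congrFun hst 0
      simpa [gamma] using this
    have e1 : s * ((P0 1 - B 1) / ‖P0 - B‖) + t * ((P1 1 - B 1) / ‖P1 - B‖) = 0 := by
      have := congrFun hst 1
      simpa [gamma] using this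
    have hs : s ≠ 0 := by
      intro hs0
      subst hs0
      have ht : t ≠ 0 := by tauto
      have c0 : P1 0 = B 0 := by
        have : t * ((P1 0 - B 0) / ‖P1 - B‖) = 0 := by linarith
        have := (mul_eq_zero.1 this).resolve_left ht
        have := (div_eq_zero_iff.1 this).resolve_right r1
        linarith
      have c1 : P1 1 = B 1 := by
        have : t * ((P1 1 - B 1) / ‖P1 - B‖) = 0 := by linarith
        have := (mul_eq_zero.1 this).resolve_left ht
        have := (div_eq_zero_iff.1 this).resolve_right r1
        linarith
      exact h1 (by ext i; fin_cases i <;> simpa [c0, c1])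
    rw [collinear_iff_of_mem (Set.mem_insert B _)]
    refine ⟨P1 - B, ?_⟩
    intro p hp
    rcases hp with h | h | h
    · exact ⟨0, by simp [h]⟩
    · refine ⟨-t * ‖P0 - B‖ / (s * ‖P1 - B‖), ?_⟩
      rw [h]
      field_simp at e0 e1
      ext i
      fin_cases i <;>
        simp only [vadd_eq_add, PiLp.add_apply, PiLp.smul_apply, PiLp.sub_apply,
          smul_eq_mul, Fin.reduceFinMk] <;>
        field_simp
      · linear_combination e0
      · linear_combination e1
    · rw [Set.mem_singleton_iff] at h
      exact ⟨1, by simp [h]⟩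
  · intro hcol
    rw [collinear_iff_of_mem (Set.mem_insert B _)] at hcol
    obtain ⟨v, hv⟩ := hcol
    obtain ⟨c0, hc0⟩ := hv P0 (by simp)
    obtain ⟨c1, hc1⟩ := hv P1 (by simp)
    have hc0ne : c0 ≠ 0 := by
      rintro rfl
      simp at hc0
      exact h0 hc0
    set c : ℝ := c1 / c0 with hc
    have hP1B : P1 - B = c • (P0 - B) := by
      rw [hc0, hc1]
      simp [smul_smul]
      rw [div_mul_cancel₀ _ hc0ne]
    have hcomp : ∀ i : Fin 2, P1 i - B i = c * (P0 i - B i) := by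
      intro i
      have := congrArg (· i) hP1B
      simpa [PiLp.sub_apply, PiLp.smul_apply] using this
    intro hli
    have k0 := hcomp 0
    have k1 := hcomp 1
    have hnum : (Pf 0 - P1 0) * (B 1 - P1 1) - (Pf 1 - P1 1) * (B 0 - P1 0) =
        c * ((Pf 0 - P0 0) * (B 1 - P0 1) - (Pf 1 - P0 1) * (B 0 - P0 0)) := by
      linear_combination (Pf 1 - B 1) * k0 - (Pf 0 - B 0) * k1
    have key : (c * ‖P0 - B‖ / ‖P1 - B‖) • gamma B P0 Pf + (-1 : ℝ) • gamma B P1 Pf = 0 := by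
      funext i
      fin_cases i <;>
        simp only [gamma, Pi.add_apply, Pi.smul_apply, smul_eq_mul, Matrix.cons_val_zero,
          Matrix.cons_val_one, Matrix.head_cons, Pi.zero_apply, Matrix.cons_val_fin_one, Fin.reduceFinMk, Matrix.cons_val] <;>
        field_simp
      · linear_combination (-1 : ℝ) * k0
      · linear_combination (-1 : ℝ) * k1
      · linear_combination (-1 : ℝ) * hnum

    have := hli _ _ key
    norm_num at this
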